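/- For all positive integers m, n and every BQAP2 instance (q, c, d), the number of feasible solutions (σ,τ) with f2(σ,τ) ≥ A2(q,c,d) is at least m^{m-1}·n^{n-1}. -/

import Mathlib

/-- Objective function of BQAP2. -/
noncomputable def f2 {m n : ℕ} (q : Fin m → Fin m → Fin n → Fin n → ℝ)
    (c : Fin m → Fin m → ℝ) (d : Fin n → Fin n → ℝ)
    (σ : Fin m → Fin m) (τ : Fin n → Fin n) : ℝ :=
  (∑ i, ∑ l, q i (σ i) (τ l) l) + (∑ i, c i (σ i)) + (∑ l, d (τ l) l)

/-- Average objective value of BQAP2. -/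
noncomputable def A2 {m n : ℕ} (q : Fin m → Fin m → Fin n → Fin n → ℝ)
    (c : Fin m → Fin m → ℝ) (d : Fin n → Fin n → ℝ) : ℝ :=
  (1 / ((m : ℝ) * n)) * (∑ i, ∑ j, ∑ k, ∑ l, q i j k l)
    + (1 / (m : ℝ)) * (∑ i, ∑ j, c i j)
    + (1 / (n : ℝ)) * (∑ i, ∑ j, d i j)

theorem domination_BQAP2 (m n : ℕ) (hm : 0 < m) (hn : 0 < n)
    (q : Fin m → Fin m → Fin n → Fin n → ℝ)
    (c : Fin m → Fin m → ℝ) (d : Fin n → Fin n → ℝ) :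
    m ^ (m - 1) * n ^ (n - 1) ≤
      {στ : (Fin m → Fin m) × (Fin n → Fin n) |
        f2 q c d στ.1 στ.2 ≥ A2 q c d}.ncard := by
  haveI : NeZero m := ⟨hm.ne'⟩
  haveI : NeZero n := ⟨hn.ne'⟩
  have hmR : (m : ℝ) ≠ 0 := Nat.cast_ne_zero.mpr hm.ne'
  have hnR : (n : ℝ) ≠ 0 := Nat.cast_ne_zero.mpr hn.ne'
  -- Key: in every shift-orbit there is a solution with value at least the average.
  have key : ∀ (σ : Fin m → Fin m) (τ : Fin n → Fin n),
      ∃ gh : Fin m × Fin n,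
        A2 q c d ≤ f2 q c d (fun i => σ i + gh.1) (fun l => τ l + gh.2) := by
    intro σ τ
    have L1 : ∑ g : Fin m, ∑ i, c i (σ i + g) = ∑ i, ∑ j, c i j := by
      rw [Finset.sum_comm]
      exact Finset.sum_congr rfl fun i _ => Equiv.sum_comp (Equiv.addLeft (σ i)) (c i)
    have L2 : ∑ h : Fin n, ∑ l, d (τ l + h) l = ∑ i, ∑ j, d i j := by
      calc ∑ h : Fin n, ∑ l, d (τ l + h) l
          = ∑ l, ∑ h : Fin n, d (τ l + h) l := Finset.sum_comm
        _ = ∑ l, ∑ k, d k l :=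
            Finset.sum_congr rfl fun l _ =>
              Equiv.sum_comp (Equiv.addLeft (τ l)) (fun k => d k l)
        _ = ∑ k, ∑ l, d k l := Finset.sum_comm
    have L3 : ∑ g : Fin m, ∑ h : Fin n, ∑ i, ∑ l, q i (σ i + g) (τ l + h) l
        = ∑ i, ∑ j, ∑ k, ∑ l, q i j k l := by
      calc ∑ g : Fin m, ∑ h : Fin n, ∑ i, ∑ l, q i (σ i + g) (τ l + h) l
          = ∑ g : Fin m, ∑ i, ∑ h : Fin n, ∑ l, q i (σ i + g) (τ l + h) l :=
            Finset.sum_congr rfl fun g _ => Finset.sum_comm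
        _ = ∑ i, ∑ g : Fin m, ∑ h : Fin n, ∑ l, q i (σ i + g) (τ l + h) l :=
            Finset.sum_comm
        _ = ∑ i, ∑ j, ∑ h : Fin n, ∑ l, q i j (τ l + h) l :=
            Finset.sum_congr rfl fun i _ =>
              Equiv.sum_comp (Equiv.addLeft (σ i))
                (fun j => ∑ h : Fin n, ∑ l, q i j (τ l + h) l)
        _ = ∑ i, ∑ j, ∑ l, ∑ h : Fin n, q i j (τ l + h) l :=
            Finset.sum_congr rfl fun i _ =>
              Finset.sum_congr rfl fun j _ => Finset.sum_comm
        _ = ∑ i, ∑ j, ∑ l, ∑ k, q i j k l :=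
            Finset.sum_congr rfl fun i _ =>
              Finset.sum_congr rfl fun j _ =>
                Finset.sum_congr rfl fun l _ =>
                  Equiv.sum_comp (Equiv.addLeft (τ l)) (fun k => q i j k l)
        _ = ∑ i, ∑ j, ∑ k, ∑ l, q i j k l :=
            Finset.sum_congr rfl fun i _ =>
              Finset.sum_congr rfl fun j _ => Finset.sum_comm
    have hsum : (∑ gh : Fin m × Fin n,
          f2 q c d (fun i => σ i + gh.1) (fun l => τ l + gh.2))
        = (∑ i, ∑ j, ∑ k, ∑ l, q i j k l) + (n : ℝ) * (∑ i, ∑ j, c i j)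
          + (m : ℝ) * (∑ i, ∑ j, d i j) := by
      rw [Fintype.sum_prod_type]
      simp only [f2, Finset.sum_add_distrib, Finset.sum_const, Finset.card_univ,
        Fintype.card_fin, nsmul_eq_mul]
      rw [← Finset.mul_sum, L1, L2, L3]
    have hA2 : (∑ _gh : Fin m × Fin n, A2 q c d)
        = (∑ i, ∑ j, ∑ k, ∑ l, q i j k l) + (n : ℝ) * (∑ i, ∑ j, c i j)
          + (m : ℝ) * (∑ i, ∑ j, d i j) := by
      rw [Finset.sum_const, Finset.card_univ, Fintype.card_prod, Fintype.card_fin,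
        Fintype.card_fin, nsmul_eq_mul, A2]
      push_cast
      field_simp
    have htot : ∑ _gh : Fin m × Fin n, A2 q c d
        ≤ ∑ gh : Fin m × Fin n,
            f2 q c d (fun i => σ i + gh.1) (fun l => τ l + gh.2) := by
      rw [hA2, hsum]
    obtain ⟨gh, -, hgh⟩ := Finset.exists_le_of_sum_le Finset.univ_nonempty htot
    exact ⟨gh, hgh⟩
  -- Counting via an injection from normalized pairs.
  set S : Set ((Fin m → Fin m) × (Fin n → Fin n)) :=
    {στ | f2 q c d στ.1 στ.2 ≥ A2 q c d} with hS
  let ext1 : ({i : Fin m // i ≠ 0} → Fin m) → Fin m → Fin m :=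
    fun a i => if h : i = 0 then 0 else a ⟨i, h⟩
  let ext2 : ({l : Fin n // l ≠ 0} → Fin n) → Fin n → Fin n :=
    fun b l => if h : l = 0 then 0 else b ⟨l, h⟩
  let F : (({i : Fin m // i ≠ 0} → Fin m) × ({l : Fin n // l ≠ 0} → Fin n)) → ↥S :=
    fun ab =>
      ⟨((fun i => ext1 ab.1 i + (key (ext1 ab.1) (ext2 ab.2)).choose.1),
        (fun l => ext2 ab.2 l + (key (ext1 ab.1) (ext2 ab.2)).choose.2)),
        (key (ext1 ab.1) (ext2 ab.2)).choose_spec⟩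
  have hFinj : Function.Injective F := by
    intro ab ab' h
    have h1 : (fun i => ext1 ab.1 i + (key (ext1 ab.1) (ext2 ab.2)).choose.1)
        = (fun i => ext1 ab'.1 i + (key (ext1 ab'.1) (ext2 ab'.2)).choose.1) :=
      congrArg Prod.fst (congrArg Subtype.val h)
    have h2 : (fun l => ext2 ab.2 l + (key (ext1 ab.1) (ext2 ab.2)).choose.2)
        = (fun l => ext2 ab'.2 l + (key (ext1 ab'.1) (ext2 ab'.2)).choose.2) :=
      congrArg Prod.snd (congrArg Subtype.val h)
    have hg : (key (ext1 ab.1) (ext2 ab.2)).choose.1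
        = (key (ext1 ab'.1) (ext2 ab'.2)).choose.1 := by
      have := congrFun h1 0
      simpa [ext1] using this
    have hh : (key (ext1 ab.1) (ext2 ab.2)).choose.2
        = (key (ext1 ab'.1) (ext2 ab'.2)).choose.2 := by
      have := congrFun h2 0
      simpa [ext2] using this
    have ha : ab.1 = ab'.1 := by
      funext i
      have := congrFun h1 i.1
      rw [hg] at this
      have h' := add_right_cancel this
      simpa [ext1, i.2] using h'
    have hb : ab.2 = ab'.2 := by
      funext l
      have := congrFun h2 l.1
      rw [hh] at this
      have h' := add_right_cancel this
      simpa [ext2, l.2] using h'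
    exact Prod.ext ha hb
  have hcard : Nat.card
      (({i : Fin m // i ≠ 0} → Fin m) × ({l : Fin n // l ≠ 0} → Fin n))
      = m ^ (m - 1) * n ^ (n - 1) := by
    simp [Nat.card_eq_fintype_card, Fintype.card_fun, Fintype.card_subtype_compl]
  calc m ^ (m - 1) * n ^ (n - 1)
      = Nat.card (({i : Fin m // i ≠ 0} → Fin m) × ({l : Fin n // l ≠ 0} → Fin n)) :=
        hcard.symm
    _ ≤ Nat.card ↥S := Nat.card_le_card_of_injective F hFinj
    _ = S.ncard := Nat.card_coe_set_eq S
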